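/- Action of H on √α·Q (Lemma 1.1(4)): For all x ∈ ℝ, H(√α·Q)(x) = −((1+b)/b)·√(α(x))·Q(x)^{1/b+2} = −((1+b)/b)·√(α(x))·α(x)^{−1}; equivalently, 𝓛Q is the constant function with value −(1+b)/b. -/

import Mathlib

open Real MeasureTheory Filter

noncomputable section

/-- `ν = -(b+1)/2`. -/
def nuP (b : ℝ) : ℝ := -(b + 1) / 2

/-- The lefton momentum profile `Q(x) = (A(1-b)/2) (cosh(νx))^{b/ν}`. -/
def Qp (b A : ℝ) (x : ℝ) : ℝ :=
  A * (1 - b) / 2 * Real.cosh (nuP b * x) ^ (b / nuP b)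

/-- The lefton velocity profile `q(x) = A (cosh(νx))^{-1/ν}`. -/
def qp (b A : ℝ) (x : ℝ) : ℝ := A * Real.cosh (nuP b * x) ^ (-1 / nuP b)

/-- `k = (A(1-b)/2)^{1/b+1}`. -/
def kP (b A : ℝ) : ℝ := (A * (1 - b) / 2) ^ (1 / b + 1)

/-- The weight `α(x) = Q(x)^{-1/b-2}`. -/
def alphaP (b A : ℝ) (x : ℝ) : ℝ := Qp b A x ^ (-1 / b - 2)

/-- `SQ(x) = (2k(1-b)/b) Q^{-1/b} + (2(b-1)/b) Q`. -/
def SQp (b A : ℝ) (x : ℝ) : ℝ :=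
  2 * kP b A * (1 - b) / b * Qp b A x ^ (-1 / b) + 2 * (b - 1) / b * Qp b A x

/-- The Pöschl–Teller potential `H̃₀(x) = 1/4 - (b(1+2b)/4) sech²(νx)`. -/
def Htilde0 (b : ℝ) (x : ℝ) : ℝ :=
  1 / 4 - b * (1 + 2 * b) / 4 * (1 / Real.cosh (nuP b * x)) ^ 2

/-- The Schrödinger operator `(Hg)(x) = (2k/b²)(−g'' + H̃₀ g)`. -/
def Hop (b A : ℝ) (g : ℝ → ℝ) (x : ℝ) : ℝ :=
  2 * kP b A / b ^ 2 * (-(deriv (deriv g) x) + Htilde0 b x * g x)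

/-- The linearized operator `(𝓛f)(x) = k(−((2α/b²) f')' − (2(b+1)/b) α f)`. -/
def Lop (b A : ℝ) (f : ℝ → ℝ) (x : ℝ) : ℝ :=
  kP b A * (-(deriv (fun y => 2 * alphaP b A y / b ^ 2 * deriv f y) x)
    - 2 * (b + 1) / b * alphaP b A x * f x)

/-- The integrand of the conserved functional `F₂`. -/
def F2Integrand (b : ℝ) (f : ℝ → ℝ) (x : ℝ) : ℝ :=
  f x ^ (-1 / b) * ((deriv f x) ^ 2 / (b ^ 2 * f x ^ 2) + 1)

/-- The squared weighted norm `‖f‖²_{H¹_α} = ∫ (f² + f'²) α`. -/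
def HalphaSq (b A : ℝ) (f : ℝ → ℝ) : ℝ :=
  ∫ x, (f x ^ 2 + deriv f x ^ 2) * alphaP b A x

/-- The `𝒵`-norm `‖f‖_𝒵 = ‖f‖_{H¹_α} + sup_x |f(x)|/Q(x)`. -/
def ZNorm (b A : ℝ) (f : ℝ → ℝ) : ℝ :=
  Real.sqrt (HalphaSq b A f) + ⨆ x : ℝ, |f x| / Qp b A x

/-- `m : ℝ → ℝ → ℝ` (time then space) solves the b-family equation in momentum form,
with velocity `u` satisfying `m = u - u_xx` and `m_t + u m_x + b u_x m = 0`. -/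
def IsBFamilySolution (b : ℝ) (m u : ℝ → ℝ → ℝ) : Prop :=
  (∀ t x, m t x = u t x - deriv (deriv (u t)) x) ∧
  ∀ t x, deriv (fun s => m s x) t + u t x * deriv (m t) x + b * deriv (u t) x * m t x = 0

/-- `(v, h)` solves the linearization of the b-family equation around the lefton:
`h - h_xx = v` and `v_t = ∂_x(q h_xx + (b-1) q' h_x - (b+1) q h + q'' h)`. -/
def IsLinearizedSolution (b A : ℝ) (v h : ℝ → ℝ → ℝ) : Prop :=
  (∀ t x, h t x - deriv (deriv (h t)) x = v t x) ∧
  ∀ t x, deriv (fun s => v s x) t =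
    deriv (fun y => qp b A y * deriv (deriv (h t)) y
      + (b - 1) * deriv (qp b A) y * deriv (h t) y
      - (b + 1) * qp b A y * h t y + deriv (deriv (qp b A)) y * h t y) x

/-- The quadratic form `(𝓛η, η) = (2k/b²)∫ η'² α − (2k(b+1)/b)∫ η² α`. -/
def quadFormL (b A : ℝ) (η : ℝ → ℝ) : ℝ :=
  2 * kP b A / b ^ 2 * (∫ x, deriv η x ^ 2 * alphaP b A x)
    - 2 * kP b A * (b + 1) / b * (∫ x, η x ^ 2 * alphaP b A x)

/-- The monotonicity weight `ψ_L(x) = (2/π) arctan(exp(νx/L))` with `L = 3 - b`. -/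
def psiL (b : ℝ) (x : ℝ) : ℝ :=
  2 / Real.pi * Real.arctan (Real.exp (nuP b * x / (3 - b)))

lemma hasDerivAt_coshpow (ν p x : ℝ) :
    HasDerivAt (fun y => Real.cosh (ν * y) ^ p)
      (p * ν * Real.cosh (ν * x) ^ (p - 1) * Real.sinh (ν * x)) x := by
  have h1 : HasDerivAt (fun y : ℝ => ν * y) ν x := by
    simpa using (hasDerivAt_id x).const_mul ν
  have h2 : HasDerivAt (fun y => Real.cosh (ν * y)) (Real.sinh (ν * x) * ν) x :=
    (Real.hasDerivAt_cosh (ν * x)).comp x h1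
  have h3 := (Real.hasDerivAt_rpow_const
    (x := Real.cosh (ν * x)) (p := p) (Or.inl (Real.cosh_pos (ν * x)).ne')).comp x h2
  exact h3.congr_deriv (by ring)

lemma hasDerivAt_coshpow' (ν p x : ℝ) :
    HasDerivAt (fun y => p * ν * Real.cosh (ν * y) ^ (p - 1) * Real.sinh (ν * y))
      (p * ν ^ 2 * (p * Real.cosh (ν * x) ^ p - (p - 1) * Real.cosh (ν * x) ^ (p - 2))) x := by
  have hX := hasDerivAt_coshpow ν (p - 1) x
  rw [show p - 1 - 1 = p - 2 by ring] at hX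
  have h1 : HasDerivAt (fun y : ℝ => ν * y) ν x := by
    simpa using (hasDerivAt_id x).const_mul ν
  have hY : HasDerivAt (fun y => Real.sinh (ν * y)) (Real.cosh (ν * x) * ν) x :=
    (Real.hasDerivAt_sinh (ν * x)).comp x h1
  have h := (hX.mul hY).const_mul (p * ν)
  have hfun : (fun y => p * ν * Real.cosh (ν * y) ^ (p - 1) * Real.sinh (ν * y))
      = (fun y => p * ν * (Real.cosh (ν * y) ^ (p - 1) * Real.sinh (ν * y))) := by
    funext y; ring
  rw [hfun]
  refine h.congr_deriv ?_
  symm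
  set c := Real.cosh (ν * x)
  set s := Real.sinh (ν * x)
  have hc : (0:ℝ) < c := Real.cosh_pos _
  have hs : s * s = c * c - 1 := by
    have := Real.cosh_sq_sub_sinh_sq (ν * x)
    nlinarith [this]
  have e2 : c ^ (p - 2) * (c * c) = c ^ p := by
    rw [show c * c = c ^ (2:ℝ) by rw [show (2:ℝ) = ((2:ℕ):ℝ) by norm_num, Real.rpow_natCast]; ring,
      ← Real.rpow_add hc, show p - 2 + 2 = p by ring]
  have e1 : c ^ (p - 1) * c = c ^ p := by
    nth_rewrite 2 [show c = c ^ (1:ℝ) by rw [Real.rpow_one]]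
    rw [← Real.rpow_add hc, show p - 1 + 1 = p by ring]
  linear_combination (-(p * ν ^ 2 * (p - 1) * c ^ (p - 2))) * hs
    + (-(p * ν ^ 2 * (p - 1))) * e2 + (-(p * ν ^ 2)) * e1

/-- Second derivative of `K · cosh(νx)^p`. -/
lemma deriv_deriv_coshpow (K ν p x : ℝ) :
    deriv (deriv (fun y => K * Real.cosh (ν * y) ^ p)) x
      = K * (p * ν ^ 2
          * (p * Real.cosh (ν * x) ^ p - (p - 1) * Real.cosh (ν * x) ^ (p - 2))) := by
  have hd : deriv (fun y => K * Real.cosh (ν * y) ^ p)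
      = fun y => K * (p * ν * Real.cosh (ν * y) ^ (p - 1) * Real.sinh (ν * y)) := by
    funext y
    exact ((hasDerivAt_coshpow ν p y).const_mul K).deriv
  rw [hd]
  exact ((hasDerivAt_coshpow' ν p x).const_mul K).deriv

section Main

variable {b A : ℝ}

lemma nuP_pos (hb : b < -1) : 0 < nuP b := by unfold nuP; linarith

lemma nuP_ne (hb : b < -1) : nuP b ≠ 0 := (nuP_pos hb).ne'

lemma bne0 (hb : b < -1) : b ≠ 0 := by intro h; rw [h] at hb; norm_num at hb

lemma Cpos (hb : b < -1) (hA : 0 < A) : 0 < A * (1 - b) / 2 := by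
  have : (0:ℝ) < 1 - b := by linarith
  positivity

lemma Qp_pos (hb : b < -1) (hA : 0 < A) (x : ℝ) : 0 < Qp b A x :=
  mul_pos (Cpos hb hA) (Real.rpow_pos_of_pos (Real.cosh_pos _) _)

/-- `Q^s` split into constant and cosh parts. -/
lemma Qp_rpow (hb : b < -1) (hA : 0 < A) (x s : ℝ) :
    Qp b A x ^ s
      = (A * (1 - b) / 2) ^ s * Real.cosh (nuP b * x) ^ (b / nuP b * s) := by
  unfold Qp
  rw [Real.mul_rpow (Cpos hb hA).le (Real.rpow_pos_of_pos (Real.cosh_pos _) _).le,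
    ← Real.rpow_mul (Real.cosh_pos (nuP b * x)).le]

/-- `√α = Q^{-1/(2b)-1}`. -/
lemma sqrt_alphaP (hb : b < -1) (hA : 0 < A) (x : ℝ) :
    Real.sqrt (alphaP b A x) = Qp b A x ^ (-1 / (2 * b) - 1) := by
  unfold alphaP
  rw [Real.sqrt_eq_rpow, ← Real.rpow_mul (Qp_pos hb hA x).le]
  congr 1
  have := bne0 hb
  field_simp


/-- `√α·Q` as an explicit cosh power. -/
lemma sqrtAlphaQ_eq (hb : b < -1) (hA : 0 < A) :
    (fun y => Real.sqrt (alphaP b A y) * Qp b A y)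
      = fun y => (A * (1 - b) / 2) ^ (-1 / (2 * b))
          * Real.cosh (nuP b * y) ^ (-1 / (2 * nuP b)) := by
  funext y
  rw [sqrt_alphaP hb hA]
  nth_rewrite 2 [show Qp b A y = Qp b A y ^ (1:ℝ) by rw [Real.rpow_one]]
  rw [← Real.rpow_add (Qp_pos hb hA y), show -1 / (2*b) - 1 + 1 = -1/(2*b) by ring,
    Qp_rpow hb hA]
  congr 2
  have h1 := bne0 hb
  have h2 := nuP_ne hb
  field_simp

/-- The RHS `√α · Q^{1/b+2}` as explicit powers. -/
lemma rhs_eq (hb : b < -1) (hA : 0 < A) (x : ℝ) :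
    Real.sqrt (alphaP b A x) * Qp b A x ^ (1 / b + 2)
      = (A * (1 - b) / 2) ^ (1 / b + 1) * (A * (1 - b) / 2) ^ (-1 / (2 * b))
          * Real.cosh (nuP b * x) ^ (-1 / (2 * nuP b) - 2) := by
  rw [sqrt_alphaP hb hA, ← Real.rpow_add (Qp_pos hb hA x),
    show -1/(2*b) - 1 + (1/b + 2) = 1/(2*b) + 1 by ring, Qp_rpow hb hA,
    ← Real.rpow_add (Cpos hb hA)]
  congr 2
  · field_simp [bne0 hb]; ring
  · have h1 := bne0 hb
    have hb1 : b + 1 ≠ 0 := by linarith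
    have h3 : nuP b = -(b+1)/2 := rfl
    have h2 : b * (b+1) ≠ 0 := mul_ne_zero h1 hb1
    have h4 : (-1:ℝ) + -b ≠ 0 := fun h => hb1 (by linarith)
    rw [h3]
    field_simp
    ring


lemma Hop_claim (hb : b < -1) (hA : 0 < A) (x : ℝ) :
    Hop b A (fun y => Real.sqrt (alphaP b A y) * Qp b A y) x
      = -((1 + b) / b) * Real.sqrt (alphaP b A x) * Qp b A x ^ (1 / b + 2) := by
  have h1 : b ≠ 0 := bne0 hb
  have hb1 : b + 1 ≠ 0 := by intro h; linarith
  have hν : nuP b = -(b + 1) / 2 := rfl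
  have hν0 : nuP b ≠ 0 := nuP_ne hb
  set c := Real.cosh (nuP b * x) with hcdef
  have hc : (0:ℝ) < c := Real.cosh_pos _
  rw [mul_assoc, rhs_eq hb hA x]
  unfold Hop Htilde0
  rw [sqrtAlphaQ_eq hb hA, deriv_deriv_coshpow]
  simp only []
  rw [show kP b A = (A * (1 - b) / 2) ^ (1/b + 1) from rfl]
  rw [← hcdef]
  have hX : c ^ (-1/(2 * nuP b)) = c ^ (-1/(2 * nuP b) - 2) * c ^ 2 := by
    rw [show c^2 = c ^ (2:ℝ) by
        rw [show (2:ℝ) = ((2:ℕ):ℝ) by norm_num, Real.rpow_natCast],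
      ← Real.rpow_add hc]
    norm_num
  rw [hX, hν]
  generalize (A * (1 - b) / 2) ^ (1 / b + 1) = W1
  generalize (A * (1 - b) / 2) ^ (-1 / (2 * b)) = W2
  generalize c ^ (-1 / (2 * (-(b + 1) / 2)) - 2) = Y
  have h5 : (-1:ℝ) - b ≠ 0 := fun h => hb1 (by linarith)
  have h6 : c ≠ 0 := hc.ne'
  have h7 : (-4:ℝ) - b * 4 ≠ 0 := fun h => hb1 (by linarith)
  have h8 : (-1:ℝ) + -b ≠ 0 := fun h => hb1 (by linarith)
  field_simp [h5, h7, h8]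
  ring


lemma alphaP_inv (hb : b < -1) (hA : 0 < A) (x : ℝ) :
    (alphaP b A x)⁻¹ = Qp b A x ^ (1 / b + 2) := by
  unfold alphaP
  rw [show (1/b + 2 : ℝ) = -(-1/b - 2) by ring, Real.rpow_neg (Qp_pos hb hA x).le]

lemma deriv_Qp (hb : b < -1) (hA : 0 < A) :
    deriv (Qp b A) = fun y => A * (1 - b) / 2 * b
      * Real.cosh (nuP b * y) ^ (b / nuP b - 1) * Real.sinh (nuP b * y) := by
  funext y
  have h := (hasDerivAt_coshpow (nuP b) (b / nuP b) y).const_mul (A * (1 - b) / 2)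
  have hQ : Qp b A = fun y => A * (1 - b) / 2 * Real.cosh (nuP b * y) ^ (b / nuP b) := rfl
  rw [hQ, h.deriv, div_mul_cancel₀ _ (nuP_ne hb)]
  ring

lemma inner_eq (hb : b < -1) (hA : 0 < A) :
    (fun y => 2 * alphaP b A y / b ^ 2 * deriv (Qp b A) y)
      = fun y => 2 * (A * (1 - b) / 2) ^ (-1/b - 1 : ℝ) / b
          * (Real.cosh (nuP b * y) * Real.sinh (nuP b * y)) := by
  have h1 : b ≠ 0 := bne0 hb
  have hb1 : b + 1 ≠ 0 := by intro h; linarith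
  have hC := Cpos hb hA
  funext y
  rw [deriv_Qp hb hA]
  simp only []
  unfold alphaP
  rw [Qp_rpow hb hA]
  have e1 : (A*(1-b)/2) ^ (-1/b-2 : ℝ) * (A*(1-b)/2) = (A*(1-b)/2) ^ (-1/b-1 : ℝ) := by
    nth_rewrite 2 [show A*(1-b)/2 = (A*(1-b)/2) ^ (1:ℝ) by rw [Real.rpow_one]]
    rw [← Real.rpow_add hC]
    congr 1
    ring
  have e2 : Real.cosh (nuP b * y) ^ (b / nuP b * (-1/b-2))
      * Real.cosh (nuP b * y) ^ (b / nuP b - 1) = Real.cosh (nuP b * y) := by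
    rw [← Real.rpow_add (Real.cosh_pos _)]
    rw [show b / nuP b * (-1/b-2) + (b / nuP b - 1) = 1 by
      rw [show nuP b = -(b+1)/2 from rfl]
      have h8 : (-1:ℝ) + -b ≠ 0 := fun h => hb1 (by linarith)
      field_simp
      ring]
    exact Real.rpow_one _
  calc 2 * ((A*(1-b)/2) ^ (-1/b-2 : ℝ) * Real.cosh (nuP b * y) ^ (b / nuP b * (-1/b-2))) / b ^ 2
        * (A * (1 - b) / 2 * b * Real.cosh (nuP b * y) ^ (b / nuP b - 1) * Real.sinh (nuP b * y))
      = 2 / b * (((A*(1-b)/2) ^ (-1/b-2 : ℝ) * (A*(1-b)/2))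
          * (Real.cosh (nuP b * y) ^ (b / nuP b * (-1/b-2))
              * Real.cosh (nuP b * y) ^ (b / nuP b - 1)) * Real.sinh (nuP b * y)) := by
        field_simp
    _ = 2 * (A * (1 - b) / 2) ^ (-1/b - 1 : ℝ) / b
          * (Real.cosh (nuP b * y) * Real.sinh (nuP b * y)) := by
        rw [e1, e2]; ring

lemma deriv_inner (hb : b < -1) (hA : 0 < A) (x : ℝ) :
    deriv (fun y => 2 * alphaP b A y / b ^ 2 * deriv (Qp b A) y) x
      = 2 * (A * (1 - b) / 2) ^ (-1/b - 1 : ℝ) / b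
          * (nuP b * (2 * Real.cosh (nuP b * x) ^ 2 - 1)) := by
  rw [inner_eq hb hA]
  have h1 : HasDerivAt (fun y : ℝ => nuP b * y) (nuP b) x := by
    simpa using (hasDerivAt_id x).const_mul (nuP b)
  have hco : HasDerivAt (fun y => Real.cosh (nuP b * y)) (Real.sinh (nuP b * x) * nuP b) x :=
    (Real.hasDerivAt_cosh _).comp x h1
  have hsi : HasDerivAt (fun y => Real.sinh (nuP b * y)) (Real.cosh (nuP b * x) * nuP b) x :=
    (Real.hasDerivAt_sinh _).comp x h1
  have h := ((hco.mul hsi).const_mul (2 * (A * (1 - b) / 2) ^ (-1/b - 1 : ℝ) / b)).deriv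
  simp only [Pi.mul_apply] at h
  rw [h]
  have hcs := Real.cosh_sq_sub_sinh_sq (nuP b * x)
  linear_combination (-(2 * (A * (1 - b) / 2) ^ (-1/b - 1 : ℝ) / b) * nuP b) * hcs

lemma Lop_claim (hb : b < -1) (hA : 0 < A) (x : ℝ) :
    Lop b A (Qp b A) x = -((1 + b) / b) := by
  have h1 : b ≠ 0 := bne0 hb
  have hb1 : b + 1 ≠ 0 := by intro h; linarith
  have hC := Cpos hb hA
  unfold Lop
  rw [deriv_inner hb hA]
  have hαQ : alphaP b A x * Qp b A x
      = (A*(1-b)/2) ^ (-1/b - 1 : ℝ) * Real.cosh (nuP b * x) ^ 2 := by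
    unfold alphaP
    nth_rewrite 2 [show Qp b A x = Qp b A x ^ (1:ℝ) by rw [Real.rpow_one]]
    rw [← Real.rpow_add (Qp_pos hb hA x), Qp_rpow hb hA]
    congr 1
    · congr 1; ring
    · rw [show b / nuP b * (-1/b - 2 + 1) = 2 by
        rw [show nuP b = -(b+1)/2 from rfl]
        have h8 : (-1:ℝ) + -b ≠ 0 := fun h => hb1 (by linarith)
        field_simp
        ring]
      rw [show (2:ℝ) = ((2:ℕ):ℝ) by norm_num, Real.rpow_natCast]
  rw [mul_assoc (2 * (b + 1) / b), hαQ]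
  rw [show kP b A = (A*(1-b)/2) ^ (1/b + 1 : ℝ) from rfl]
  have hk : (A*(1-b)/2) ^ (1/b + 1 : ℝ) * (A*(1-b)/2) ^ (-1/b - 1 : ℝ) = 1 := by
    rw [← Real.rpow_add hC, show (1/b + 1) + (-1/b - 1) = (0:ℝ) by ring, Real.rpow_zero]
  rw [show nuP b = -(b+1)/2 from rfl]
  generalize hW : (A*(1-b)/2) ^ (1/b + 1 : ℝ) = W1 at *
  generalize hW2 : (A*(1-b)/2) ^ (-1/b - 1 : ℝ) = W2 at *
  set c := Real.cosh (-(b+1)/2 * x)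
  field_simp
  linear_combination (-1 - b) * hk

end Main

/-- **Action of `H` on `√α·Q`** (Lemma 1.1(4)): `H(√α Q) = −((1+b)/b) √α Q^{1/b+2}
 = −((1+b)/b) √α α⁻¹`; equivalently `𝓛Q` is the constant `−(1+b)/b`. -/
theorem H_on_sqrtAlpha_Q (b A : ℝ) (hb : b < -1) (hA : 0 < A) :
    (∀ x : ℝ,
      Hop b A (fun y => Real.sqrt (alphaP b A y) * Qp b A y) x
        = -((1 + b) / b) * Real.sqrt (alphaP b A x) * Qp b A x ^ (1 / b + 2)) ∧
    (∀ x : ℝ,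
      Hop b A (fun y => Real.sqrt (alphaP b A y) * Qp b A y) x
        = -((1 + b) / b) * Real.sqrt (alphaP b A x) * (alphaP b A x)⁻¹) ∧
    ∀ x : ℝ, Lop b A (Qp b A) x = -((1 + b) / b) := by
  refine ⟨fun x => Hop_claim hb hA x, fun x => ?_, fun x => Lop_claim hb hA x⟩
  rw [Hop_claim hb hA x, alphaP_inv hb hA x]
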